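/- Let H be a finite connected simple graph that has weak BEL gadgets. Then H has BEL gadgets: for every finite graph G and every 2-coloring ψ of the edges of G without a monochromatic copy of H, there exists a finite graph F such that F is not Ramsey for H, F contains G as an induced subgraph, and every 2-coloring of the edges of F without a monochromatic copy of H, restricted to the copy of G, agrees with ψ up to a permutation of the two colors. -/

import Mathlib

open SimpleGraph

/-- The subgraph of `F` consisting of the edges that receive color `b` under the
edge 2-coloring `c` (colors are `Bool`: `true` = red, `false` = blue). -/
def colorSubgraph {V : Type*} (F : SimpleGraph V) (c : Sym2 V → Bool) (b : Bool) :
    SimpleGraph V where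
  Adj x y := F.Adj x y ∧ c s(x, y) = b
  symm := by
    constructor
    intro x y h
    exact ⟨h.1.symm, by rw [Sym2.eq_swap]; exact h.2⟩
  loopless := by
    constructor
    intro x h
    exact h.1.ne rfl

/-- `G` contains a copy of `H`, i.e. a subgraph isomorphic to `H`. -/
def ContainsCopy {V W : Type*} (G : SimpleGraph V) (H : SimpleGraph W) : Prop :=
  ∃ f : W → V, Function.Injective f ∧ ∀ ⦃a b⦄, H.Adj a b → G.Adj (f a) (f b)

/-- The 2-coloring `c` of (the edges of) `F` contains a monochromatic copy of `H`. -/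
def HasMonoCopy {V W : Type*} (F : SimpleGraph V) (H : SimpleGraph W)
    (c : Sym2 V → Bool) : Prop :=
  ∃ b : Bool, ContainsCopy (colorSubgraph F c b) H

/-- `F → H`: every 2-coloring of the edges of `F` contains a monochromatic copy of `H`. -/
def IsRamseyFor {V W : Type*} (F : SimpleGraph V) (H : SimpleGraph W) : Prop :=
  ∀ c : Sym2 V → Bool, HasMonoCopy F H c

/-- `F` is Ramsey `H`-minimal: `F → H` but no proper subgraph of `F` is Ramsey for `H`. -/
def IsRamseyMinimalFor {V W : Type*} (F : SimpleGraph V) (H : SimpleGraph W) : Prop :=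
  IsRamseyFor F H ∧ ∀ F' : F.Subgraph, F' ≠ ⊤ → ¬ IsRamseyFor F'.coe H

/-- The degree of the vertex `v` in `G`. -/
noncomputable def degOf {V : Type*} (G : SimpleGraph V) (v : V) : ℕ :=
  (G.neighborSet v).ncard

/-- The minimum degree `δ(G)`. -/
noncomputable def minDeg {V : Type*} (G : SimpleGraph V) : ℕ :=
  sInf {k | ∃ v, degOf G v = k}

/-- `s(H)`: the minimum of `δ(F)` over all Ramsey `H`-minimal graphs `F`. -/
noncomputable def sVal {W : Type*} (H : SimpleGraph W) : ℕ :=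
  sInf {k | ∃ (n : ℕ) (F : SimpleGraph (Fin n)), IsRamseyMinimalFor F H ∧ minDeg F = k}

/-- `H` has BEL gadgets: for every finite graph `G` and every 2-coloring `ψ` of the
edges of `G` without a monochromatic copy of `H`, there is a finite graph `F` that is
not Ramsey for `H`, contains `G` as an induced subgraph, and in every 2-coloring of `F`
without a monochromatic copy of `H` the copy of `G` is colored according to `ψ`,
up to a permutation of the two colors. -/
def HasBELGadgets {W : Type*} (H : SimpleGraph W) : Prop :=
  ∀ (m : ℕ) (G : SimpleGraph (Fin m)) (ψ : Sym2 (Fin m) → Bool),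
    ¬ HasMonoCopy G H ψ →
    ∃ (n : ℕ) (F : SimpleGraph (Fin n)) (g : Fin m → Fin n),
      ¬ IsRamseyFor F H ∧
      Function.Injective g ∧
      (∀ a b, G.Adj a b ↔ F.Adj (g a) (g b)) ∧
      ∀ c : Sym2 (Fin n) → Bool, ¬ HasMonoCopy F H c →
        (∀ a b, G.Adj a b → c s(g a, g b) = ψ s(a, b)) ∨
        (∀ a b, G.Adj a b → c s(g a, g b) = !ψ s(a, b))

/-- `H` has weak BEL gadgets: for every pair of edge-disjoint finite graphs `G₀`, `G₁`
on the same vertex set, both `H`-free, there is a finite graph `G` containing an induced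
copy of `G₀ ∪ G₁` (via the injection `g`) such that there is a 2-coloring of `G` without
a monochromatic copy of `H` in which the copy of `G₀` is red (`true`) and the copy of
`G₁` is blue (`false`), and in every 2-coloring of `G` without a monochromatic copy of
`H` the copy of `G₀` is monochromatic and the copy of `G₁` is monochromatic. -/
def HasWeakBELGadgets {W : Type*} (H : SimpleGraph W) : Prop :=
  ∀ (m : ℕ) (G₀ G₁ : SimpleGraph (Fin m)),
    (∀ x y, ¬ (G₀.Adj x y ∧ G₁.Adj x y)) →
    ¬ ContainsCopy G₀ H → ¬ ContainsCopy G₁ H →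
    ∃ (n : ℕ) (G : SimpleGraph (Fin n)) (g : Fin m → Fin n),
      Function.Injective g ∧
      (∀ a b, (G₀ ⊔ G₁).Adj a b ↔ G.Adj (g a) (g b)) ∧
      (∃ c : Sym2 (Fin n) → Bool,
        ¬ HasMonoCopy G H c ∧
        (∀ a b, G₀.Adj a b → c s(g a, g b) = true) ∧
        (∀ a b, G₁.Adj a b → c s(g a, g b) = false)) ∧
      (∀ c : Sym2 (Fin n) → Bool, ¬ HasMonoCopy G H c →
        (∃ b : Bool, ∀ a a', G₀.Adj a a' → c s(g a, g a') = b) ∧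
        (∃ b : Bool, ∀ a a', G₁.Adj a a' → c s(g a, g a') = b))


private lemma reach_iff_aux {V : Type*} {G : SimpleGraph V} (P : V → Prop)
    (h : ∀ a b, G.Adj a b → (P a ↔ P b)) {x y : V} (hr : G.Reachable x y) :
    P x ↔ P y := by
  obtain ⟨w⟩ := hr
  induction w with
  | nil => exact Iff.rfl
  | cons ha _ ih => exact (h _ _ ha).trans ih

private lemma exists_adj_aux {V : Type*} {G : SimpleGraph V} (hc : G.Preconnected)
    {x y : V} (hxy : x ≠ y) : ∃ z, G.Adj x z := by
  obtain ⟨w⟩ := hc x y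
  cases w with
  | nil => exact absurd rfl hxy
  | cons ha _ => exact ⟨_, ha⟩

private lemma no_embed_minus_aux {V : Type*} [Fintype V] (H : SimpleGraph V) {u v : V}
    (huv : H.Adj u v) (f : V → V) (hf : Function.Injective f)
    (hhom : ∀ a b, H.Adj a b → H.Adj (f a) (f b) ∧ s(f a, f b) ≠ s(u, v)) : False := by
  have hfin : H.edgeSet.Finite := Set.toFinite _
  have hmaps : ∀ e ∈ H.edgeSet, Sym2.map f e ∈ H.edgeSet \ {s(u, v)} := by
    intro e he
    induction e with
    | _ a b =>
      rw [SimpleGraph.mem_edgeSet] at he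
      obtain ⟨h1, h2⟩ := hhom a b he
      exact ⟨by simpa using h1, by simpa using h2⟩
  have h1 := Set.ncard_le_ncard_of_injOn (Sym2.map f) hmaps
    ((Sym2.map.injective hf).injOn) hfin.diff
  have h2 := Set.ncard_diff_singleton_lt_of_mem (H.mem_edgeSet.2 huv) hfin
  omega

set_option maxHeartbeats 1000000 in
/-- If a finite connected simple graph `H` has weak BEL gadgets, then it has BEL
gadgets. -/
theorem stmt_14 (V : Type) [Fintype V] (H : SimpleGraph V)
    (hconn : H.Connected) (hweak : HasWeakBELGadgets H) :
    HasBELGadgets H := by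
  classical
  intro m G ψ hψ
  have hR : ¬ ContainsCopy (colorSubgraph G ψ true) H := fun h => hψ ⟨true, h⟩
  have hB : ¬ ContainsCopy (colorSubgraph G ψ false) H := fun h => hψ ⟨false, h⟩
  by_cases hGE : ∀ a b : Fin m, ¬ G.Adj a b
  · exact ⟨m, G, id, fun hram => hψ (hram ψ), Function.injective_id,
      fun a b => Iff.rfl, fun c _ => Or.inl fun a b hab => absurd hab (hGE a b)⟩
  push_neg at hGE
  obtain ⟨p, q, hpq⟩ := hGE
  have hVne : Nonempty V := hconn.nonempty
  by_cases hsub : ∀ x y : V, x = y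
  · exact absurd ⟨fun _ => p, fun a b _ => hsub a b,
      fun a b hab => absurd (hsub a b) hab.ne⟩ hR
  push_neg at hsub
  obtain ⟨u₀, w₀, hu₀w₀⟩ := hsub
  obtain ⟨v₀, hu₀v₀⟩ := exists_adj_aux hconn.preconnected hu₀w₀
  by_cases hcard : Fintype.card V ≤ 2
  · -- `H` has exactly two vertices, so `H ⊆ K₂` and any single edge carries a copy of `H`.
    have hall : ∀ x : V, x = u₀ ∨ x = v₀ := by
      intro x
      by_contra hx
      push_neg at hx
      have h3 : ({u₀, v₀, x} : Finset V).card = 3 := by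
        rw [Finset.card_insert_of_notMem (by simp [hu₀v₀.ne, Ne.symm hx.1]),
          Finset.card_insert_of_notMem (by simp [Ne.symm hx.2]),
          Finset.card_singleton]
      have h4 := Finset.card_le_univ ({u₀, v₀, x} : Finset V)
      rw [h3] at h4
      omega
    refine absurd (⟨ψ s(p, q), fun x => if x = u₀ then p else q, ?_, ?_⟩ :
      HasMonoCopy G H ψ) hψ
    · intro a b hab
      simp only at hab
      rcases hall a with ha | ha <;> rcases hall b with hb | hb
      · exact ha.trans hb.symm
      · exfalso
        rw [if_pos ha, if_neg (by rw [hb]; exact hu₀v₀.ne')] at hab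
        exact hpq.ne hab
      · exfalso
        rw [if_neg (by rw [ha]; exact hu₀v₀.ne'), if_pos hb] at hab
        exact hpq.ne hab.symm
      · exact ha.trans hb.symm
    · intro a b hab
      have hne := hab.ne
      simp only
      rcases hall a with ha | ha <;> rcases hall b with hb | hb
      · exact absurd (ha.trans hb.symm) hne
      · rw [if_pos ha, if_neg (by rw [hb]; exact hu₀v₀.ne')]
        exact ⟨hpq, rfl⟩
      · rw [if_neg (by rw [ha]; exact hu₀v₀.ne'), if_pos hb]
        exact ⟨hpq.symm, by rw [Sym2.eq_swap]⟩
      · exact absurd (ha.trans hb.symm) hne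
  push_neg at hcard
  -- Main case: `H` is connected with at least 3 vertices, and `H.Adj u₀ v₀`.
  set k := Fintype.card V with hk
  set eV : V ≃ Fin k := Fintype.equivFin V with heV
  have hLinj : Function.Injective (Fin.castAdd (n := m) k) := Fin.castAdd_injective m k
  have hιinj : Function.Injective (fun x : V => Fin.natAdd m (eV x)) := by
    intro a b hab
    exact eV.injective (Fin.val_injective (by simpa [Fin.ext_iff] using hab))
  set Lf : Fin m → Fin (m + k) := Fin.castAdd k with hLf
  set ιf : V → Fin (m + k) := fun x => Fin.natAdd m (eV x) with hιf
  have hLlt : ∀ a : Fin m, (Lf a : ℕ) < m := fun a => a.isLt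
  have hιge : ∀ x : V, m ≤ (ιf x : ℕ) := fun x => Nat.le_add_right m _
  have hLι : ∀ (a : Fin m) (x : V), Lf a ≠ ιf x := by
    intro a x h
    have h1 := hLlt a
    have h2 := hιge x
    rw [h] at h1
    omega
  set G₀' : SimpleGraph (Fin (m + k)) :=
    SimpleGraph.map (⟨Lf, hLinj⟩ : Fin m ↪ Fin (m + k)) (colorSubgraph G ψ true) ⊔
      (SimpleGraph.map (⟨ιf, hιinj⟩ : V ↪ Fin (m + k)) H \ fromEdgeSet {s(ιf u₀, ιf v₀)}) with hG0
  set G₁' : SimpleGraph (Fin (m + k)) :=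
    SimpleGraph.map (⟨Lf, hLinj⟩ : Fin m ↪ Fin (m + k)) (colorSubgraph G ψ false) ⊔
      fromEdgeSet {s(ιf u₀, ιf v₀)} with hG1
  have hG0adj : ∀ x y, G₀'.Adj x y ↔
      ((∃ a b, (G.Adj a b ∧ ψ s(a, b) = true) ∧ Lf a = x ∧ Lf b = y) ∨
       ((∃ a b, H.Adj a b ∧ ιf a = x ∧ ιf b = y) ∧
          ¬(s(x, y) = s(ιf u₀, ιf v₀) ∧ x ≠ y))) := by
    intro x y
    rw [hG0]
    simp only [SimpleGraph.sup_adj, SimpleGraph.sdiff_adj, SimpleGraph.map_adj,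
      SimpleGraph.fromEdgeSet_adj, Set.mem_singleton_iff]
    rfl
  have hG1adj : ∀ x y, G₁'.Adj x y ↔
      ((∃ a b, (G.Adj a b ∧ ψ s(a, b) = false) ∧ Lf a = x ∧ Lf b = y) ∨
       (s(x, y) = s(ιf u₀, ιf v₀) ∧ x ≠ y)) := by
    intro x y
    rw [hG1]
    simp only [SimpleGraph.sup_adj, SimpleGraph.map_adj,
      SimpleGraph.fromEdgeSet_adj, Set.mem_singleton_iff]
    rfl
  have hdisj : ∀ x y, ¬ (G₀'.Adj x y ∧ G₁'.Adj x y) := by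
    rintro x y ⟨h0, h1⟩
    rw [hG0adj] at h0
    rw [hG1adj] at h1
    rcases h0 with ⟨a, b, hRab, ha, hb⟩ | ⟨⟨a, b, hH, ha, hb⟩, hnE⟩
    · rcases h1 with ⟨a', b', hBab, ha', hb'⟩ | ⟨hE, hne⟩
      · have e1 : a = a' := hLinj (ha.trans ha'.symm)
        have e2 : b = b' := hLinj (hb.trans hb'.symm)
        subst e1; subst e2
        rw [hRab.2] at hBab
        exact absurd hBab.2 (by simp)
      · rcases Sym2.eq_iff.1 hE with ⟨hxu, _⟩ | ⟨hxv, _⟩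
        · exact hLι a u₀ (ha.trans hxu)
        · exact hLι a v₀ (ha.trans hxv)
    · rcases h1 with ⟨a', b', hBab, ha', hb'⟩ | ⟨hE, hne⟩
      · exact hLι a' a (ha'.trans ha.symm)
      · exact hnE ⟨hE, hne⟩
  have hfree0 : ¬ ContainsCopy G₀' H := by
    rintro ⟨f, hfinj, hfhom⟩
    have hiff : ∀ a b, H.Adj a b → (((f a : ℕ) < m) ↔ ((f b : ℕ) < m)) := by
      intro a b hab
      have h := (hG0adj _ _).1 (hfhom hab)
      rcases h with ⟨a', b', _, ha', hb'⟩ | ⟨⟨a', b', _, ha', hb'⟩, _⟩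
      · rw [← ha', ← hb']
        exact iff_of_true (hLlt a') (hLlt b')
      · rw [← ha', ← hb']
        exact iff_of_false (by have := hιge a'; omega) (by have := hιge b'; omega)
    obtain ⟨x₀⟩ := hVne
    by_cases hP : (f x₀ : ℕ) < m
    · have hall : ∀ x, (f x : ℕ) < m := fun x =>
        (reach_iff_aux (fun z => (f z : ℕ) < m) hiff (hconn.preconnected x x₀)).2 hP
      refine hR ⟨fun x => ⟨(f x : ℕ), hall x⟩, ?_, ?_⟩
      · intro a b hab
        simp only [Fin.mk.injEq] at hab
        exact hfinj (Fin.val_injective hab)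
      · intro a b hab
        have h := (hG0adj _ _).1 (hfhom hab)
        rcases h with ⟨a', b', hRab, ha', hb'⟩ | ⟨⟨a', b', _, ha', hb'⟩, _⟩
        · have e1 : (⟨(f a : ℕ), hall a⟩ : Fin m) = a' := by
            have h := congrArg Fin.val ha'
            simp only [hLf, Fin.coe_castAdd] at h
            exact Fin.ext h.symm
          have e2 : (⟨(f b : ℕ), hall b⟩ : Fin m) = b' := by
            have h := congrArg Fin.val hb'
            simp only [hLf, Fin.coe_castAdd] at h
            exact Fin.ext h.symm
          beta_reduce
          rw [e1, e2]
          exact hRab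
        · exfalso
          have h1 := hall a
          have h2 := hιge a'
          rw [← ha'] at h1
          omega
    · have hall : ∀ x, ¬ (f x : ℕ) < m := fun x hx =>
        hP ((reach_iff_aux (fun z => (f z : ℕ) < m) hiff (hconn.preconnected x₀ x)).2 hx)
      have hlt : ∀ x, (f x : ℕ) - m < k := fun x => by
        have := (f x).isLt
        omega
      set f' : V → V := fun x => eV.symm ⟨(f x : ℕ) - m, hlt x⟩ with hf'
      have hι' : ∀ x, ιf (f' x) = f x := by
        intro x
        rw [hf', hιf]
        simp only [Equiv.apply_symm_apply]
        apply Fin.ext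
        simp only [Fin.coe_natAdd]
        have := hall x
        omega
      have hf'inj : Function.Injective f' := fun a b hab =>
        hfinj (by rw [← hι' a, ← hι' b, hab])
      apply no_embed_minus_aux H hu₀v₀ f' hf'inj
      intro a b hab
      have h := (hG0adj _ _).1 (hfhom hab)
      rcases h with ⟨a', b', _, ha', hb'⟩ | ⟨⟨a', b', hH, ha', hb'⟩, hnE⟩
      · exfalso
        have h1 := hall a
        have h2 := hLlt a'
        rw [ha'] at h2
        exact h1 h2
      · have e1 : a' = f' a := hιinj (by rw [hι' a]; exact ha')
        have e2 : b' = f' b := hιinj (by rw [hι' b]; exact hb')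
        rw [e1, e2] at hH
        refine ⟨hH, fun heq => hnE ⟨?_, fun h => hab.ne (hfinj h)⟩⟩
        rw [← hι' a, ← hι' b]
        have := congrArg (Sym2.map ιf) heq
        simpa using this
  have hfree1 : ¬ ContainsCopy G₁' H := by
    rintro ⟨f, hfinj, hfhom⟩
    have hiff : ∀ a b, H.Adj a b → (((f a : ℕ) < m) ↔ ((f b : ℕ) < m)) := by
      intro a b hab
      have h := (hG1adj _ _).1 (hfhom hab)
      rcases h with ⟨a', b', _, ha', hb'⟩ | ⟨hE, _⟩
      · rw [← ha', ← hb']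
        exact iff_of_true (hLlt a') (hLlt b')
      · rcases Sym2.eq_iff.1 hE with ⟨hx, hy⟩ | ⟨hx, hy⟩ <;>
        · rw [hx, hy]
          exact iff_of_false (by have := hιge u₀; have := hιge v₀; omega)
            (by have := hιge u₀; have := hιge v₀; omega)
    obtain ⟨x₀⟩ := hVne
    by_cases hP : (f x₀ : ℕ) < m
    · have hall : ∀ x, (f x : ℕ) < m := fun x =>
        (reach_iff_aux (fun z => (f z : ℕ) < m) hiff (hconn.preconnected x x₀)).2 hP
      refine hB ⟨fun x => ⟨(f x : ℕ), hall x⟩, ?_, ?_⟩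
      · intro a b hab
        simp only [Fin.mk.injEq] at hab
        exact hfinj (Fin.val_injective hab)
      · intro a b hab
        have h := (hG1adj _ _).1 (hfhom hab)
        rcases h with ⟨a', b', hBab, ha', hb'⟩ | ⟨hE, _⟩
        · have e1 : (⟨(f a : ℕ), hall a⟩ : Fin m) = a' := by
            have h := congrArg Fin.val ha'
            simp only [hLf, Fin.coe_castAdd] at h
            exact Fin.ext h.symm
          have e2 : (⟨(f b : ℕ), hall b⟩ : Fin m) = b' := by
            have h := congrArg Fin.val hb'
            simp only [hLf, Fin.coe_castAdd] at h
            exact Fin.ext h.symm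
          beta_reduce
          rw [e1, e2]
          exact hBab
        · exfalso
          rcases Sym2.eq_iff.1 hE with ⟨hx, _⟩ | ⟨hx, _⟩ <;>
          · have h1 := hall a
            rw [hx] at h1
            have := hιge u₀
            have := hιge v₀
            omega
    · have hall : ∀ x, ¬ (f x : ℕ) < m := fun x hx =>
        hP ((reach_iff_aux (fun z => (f z : ℕ) < m) hiff (hconn.preconnected x₀ x)).2 hx)
      have hlt : ∀ x, (f x : ℕ) - m < k := fun x => by
        have := (f x).isLt
        omega
      set f' : V → V := fun x => eV.symm ⟨(f x : ℕ) - m, hlt x⟩ with hf'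
      have hι' : ∀ x, ιf (f' x) = f x := by
        intro x
        rw [hf', hιf]
        simp only [Equiv.apply_symm_apply]
        apply Fin.ext
        simp only [Fin.coe_natAdd]
        have := hall x
        omega
      have hf'inj : Function.Injective f' := fun a b hab =>
        hfinj (by rw [← hι' a, ← hι' b, hab])
      have hval : ∀ a b, H.Adj a b → (f' a = u₀ ∨ f' a = v₀) := by
        intro a b hab
        have h := (hG1adj _ _).1 (hfhom hab)
        rcases h with ⟨a', b', _, ha', hb'⟩ | ⟨hE, _⟩
        · exfalso
          have h1 := hall a
          have h2 := hLlt a'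
          rw [ha'] at h2
          exact h1 h2
        · rcases Sym2.eq_iff.1 hE with ⟨hx, _⟩ | ⟨hx, _⟩
          · exact Or.inl (hιinj (by rw [hι' a]; exact hx))
          · exact Or.inr (hιinj (by rw [hι' a]; exact hx))
      have hvals : ∀ x : V, f' x = u₀ ∨ f' x = v₀ := by
        intro x
        obtain ⟨y, hy⟩ := Fintype.exists_ne_of_one_lt_card (by omega) x
        obtain ⟨z, hz⟩ := exists_adj_aux hconn.preconnected (Ne.symm hy)
        exact hval x z hz
      have hsubset : Finset.univ.image f' ⊆ {u₀, v₀} := by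
        intro y hy
        simp only [Finset.mem_image, Finset.mem_univ, true_and] at hy
        obtain ⟨x, rfl⟩ := hy
        simpa using hvals x
      have h1 : (Finset.univ.image f').card = Fintype.card V := by
        rw [Finset.card_image_of_injective _ hf'inj, Finset.card_univ]
      have h2 : ({u₀, v₀} : Finset V).card ≤ 2 :=
        Finset.card_insert_le _ _ |>.trans (by simp)
      have h3 := Finset.card_le_card hsubset
      omega
  obtain ⟨n, Gg, g', hg'inj, hadjiff, ⟨c₀, hc₀, _, _⟩, huniv⟩ :=
    hweak (m + k) G₀' G₁' hdisj hfree0 hfree1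
  refine ⟨n, Gg, fun a => g' (Lf a), fun hram => hc₀ (hram c₀), hg'inj.comp hLinj, ?_, ?_⟩
  · intro a b
    rw [← hadjiff (Lf a) (Lf b)]
    constructor
    · intro hab
      rcases hc : ψ s(a, b) with _ | _
      · exact Or.inr ((hG1adj _ _).2 (Or.inl ⟨a, b, ⟨hab, hc⟩, rfl, rfl⟩))
      · exact Or.inl ((hG0adj _ _).2 (Or.inl ⟨a, b, ⟨hab, hc⟩, rfl, rfl⟩))
    · intro hab
      rcases hab with h | h
      · rw [hG0adj] at h
        rcases h with ⟨a', b', hRab, ha', hb'⟩ | ⟨⟨a', b', _, ha', hb'⟩, _⟩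
        · have e1 : a' = a := hLinj ha'
          have e2 : b' = b := hLinj hb'
          rw [e1, e2] at hRab
          exact hRab.1
        · exact absurd ha'.symm (hLι a a')
      · rw [hG1adj] at h
        rcases h with ⟨a', b', hBab, ha', hb'⟩ | ⟨hE, _⟩
        · have e1 : a' = a := hLinj ha'
          have e2 : b' = b := hLinj hb'
          rw [e1, e2] at hBab
          exact hBab.1
        · exfalso
          rcases Sym2.eq_iff.1 hE with ⟨hx, _⟩ | ⟨hx, _⟩
          · exact hLι a u₀ hx
          · exact hLι a v₀ hx
  · intro c hc
    obtain ⟨⟨b₀, hb₀⟩, ⟨b₁, hb₁⟩⟩ := huniv c hc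
    have hne : b₁ = !b₀ := by
      by_contra hne
      have hbb : b₁ = b₀ := by
        cases b₀ <;> cases b₁
        · rfl
        · exact absurd rfl hne
        · exact absurd rfl hne
        · rfl
      apply hc
      refine ⟨b₀, fun x => g' (ιf x), hg'inj.comp hιinj, ?_⟩
      intro a b hab
      have hne' : ιf a ≠ ιf b := fun h => hab.ne (hιinj h)
      by_cases hE : s(ιf a, ιf b) = s(ιf u₀, ιf v₀)
      · have hadj1 : G₁'.Adj (ιf a) (ιf b) := (hG1adj _ _).2 (Or.inr ⟨hE, hne'⟩)
        refine ⟨(hadjiff _ _).1 (Or.inr hadj1), ?_⟩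
        rw [hb₁ _ _ hadj1, hbb]
      · have hadj0 : G₀'.Adj (ιf a) (ιf b) :=
          (hG0adj _ _).2 (Or.inr ⟨⟨a, b, hab, rfl, rfl⟩, fun h => hE h.1⟩)
        exact ⟨(hadjiff _ _).1 (Or.inl hadj0), hb₀ _ _ hadj0⟩
    have key : ∀ a b, G.Adj a b → c s(g' (Lf a), g' (Lf b)) =
        (if ψ s(a, b) = true then b₀ else !b₀) := by
      intro a b hab
      rcases hx : ψ s(a, b) with _ | _
      · have hadj1 : G₁'.Adj (Lf a) (Lf b) :=
          (hG1adj _ _).2 (Or.inl ⟨a, b, ⟨hab, hx⟩, rfl, rfl⟩)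
        rw [hb₁ _ _ hadj1, hne]
        simp
      · have hadj0 : G₀'.Adj (Lf a) (Lf b) :=
          (hG0adj _ _).2 (Or.inl ⟨a, b, ⟨hab, hx⟩, rfl, rfl⟩)
        rw [hb₀ _ _ hadj0]
        simp
    rcases hb : b₀ with _ | _
    · refine Or.inr fun a b hab => ?_
      rw [key a b hab]
      rcases hx : ψ s(a, b) <;> simp [hb]
    · refine Or.inl fun a b hab => ?_
      rw [key a b hab]
      rcases hx : ψ s(a, b) <;> simp [hb]
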